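/- Let G=(X,w,κ,μ) be a connected graph. Suppose either f satisfies (F1) and λ>0, or f satisfies (F2) with constant L>0 and 0<λ<1/L. Let u_1,u_2∈dom(Δ) satisfy u_k+λ(−f(u_k)+Δu_k)=g_k on X (k=1,2), and assume one of: (a) G contains no infinite path; or (b) G satisfies (IP) and there exists p>0 such that ∑_n |u_1(x_n)−u_2(x_n)|^p μ(x_n)<∞ for every infinite path {x_n}. If g_1 ≥ g_2 on X, then u_1 ≥ u_2 on X. In particular, if G contains no infinite path or satisfies (IP), then for every 1≤p<∞ the map u ↦ u+λ(−f(u)+Δu) is injective on dom_p(𝒜). -/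

import Mathlib

open Filter Topology MeasureTheory

/-- A weighted graph `G = (X, w, κ, μ)`. -/
structure WGraph (X : Type*) where
  w : X → X → ℝ
  kap : X → ℝ
  mu : X → ℝ
  w_nonneg : ∀ x y, 0 ≤ w x y
  w_symm : ∀ x y, w x y = w y x
  w_loopless : ∀ x, w x x = 0
  w_summable : ∀ x, Summable (fun y => w x y)
  kap_nonneg : ∀ x, 0 ≤ kap x
  mu_pos : ∀ x, 0 < mu x

namespace WGraph

variable {X : Type*}

/-- Adjacency: `x ∼ y` iff `w x y > 0`. -/
def Adj (G : WGraph X) (x y : X) : Prop := 0 < G.w x y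

/-- `G` is connected: any two nodes are joined by a finite walk. -/
def Connected (G : WGraph X) : Prop := ∀ x y : X, Relation.ReflTransGen G.Adj x y

/-- An infinite path: injective sequence of consecutively adjacent nodes. -/
def InfinitePath (G : WGraph X) (γ : ℕ → X) : Prop :=
  Function.Injective γ ∧ ∀ n, G.Adj (γ n) (γ (n + 1))

/-- Condition (IP): every infinite path has infinite total measure. -/
def CondIP (G : WGraph X) : Prop :=
  ∀ γ : ℕ → X, G.InfinitePath γ → ¬ Summable (fun n => G.mu (γ n))

/-- Condition (B): bounded edge degree. -/
def CondB (G : WGraph X) : Prop :=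
  ∃ C : ℝ, ∀ x, (∑' y, G.w x y) / G.mu x ≤ C

/-- Condition (C_p). -/
def CondCp (G : WGraph X) (p : ℝ) : Prop :=
  ∀ x, Summable (fun y => G.w x y ^ p / G.mu y ^ (p - 1))

/-- Membership in `ℓ^p(X,μ)` for `1 ≤ p < ∞`. -/
def memLp (G : WGraph X) (p : ℝ) (u : X → ℝ) : Prop :=
  Summable (fun x => |u x| ^ p * G.mu x)

/-- The `ℓ^p(X,μ)`-norm. -/
noncomputable def lpNorm (G : WGraph X) (p : ℝ) (u : X → ℝ) : ℝ :=
  (∑' x, |u x| ^ p * G.mu x) ^ (1 / p)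

/-- Membership in the formal domain of the graph Laplacian. -/
def inDomLap (G : WGraph X) (u : X → ℝ) : Prop :=
  ∀ x, Summable (fun y => G.w x y * |u y|)

/-- The formal graph Laplacian. -/
noncomputable def lap (G : WGraph X) (u : X → ℝ) (x : X) : ℝ :=
  (1 / G.mu x) * ∑' y, G.w x y * (u x - u y) + (G.kap x / G.mu x) * u x

/-- The nonlinear operator `𝒜 u = -f ∘ u + Δ u`. -/
noncomputable def Aop (G : WGraph X) (f : ℝ → ℝ) (u : X → ℝ) (x : X) : ℝ :=
  -f (u x) + G.lap u x

/-- `dom_p(𝒜)`. -/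
def inDomA (G : WGraph X) (f : ℝ → ℝ) (p : ℝ) (u : X → ℝ) : Prop :=
  G.memLp p u ∧ G.inDomLap u ∧ G.memLp p (G.Aop f u)

end WGraph

/-- Condition (F1): `f` continuous, monotone decreasing, `f 0 = 0`. -/
def CondF1 (f : ℝ → ℝ) : Prop := Continuous f ∧ Antitone f ∧ f 0 = 0

/-- Condition (F2): `f` uniformly Lipschitz with constant `L > 0`, `f 0 = 0`. -/
def CondF2 (f : ℝ → ℝ) (L : ℝ) : Prop :=
  0 < L ∧ (∀ s t : ℝ, |f t - f s| ≤ L * |t - s|) ∧ f 0 = 0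


private lemma wg_summable_mul {X : Type*} (G : WGraph X) (u : X → ℝ)
    (hu : G.inDomLap u) (x : X) : Summable fun y => G.w x y * u y := by
  rw [← summable_abs_iff]
  refine (hu x).congr fun y => ?_
  rw [abs_mul, abs_of_nonneg (G.w_nonneg x y)]

private lemma wg_summable_diff {X : Type*} (G : WGraph X) (u : X → ℝ)
    (hu : G.inDomLap u) (x : X) : Summable fun y => G.w x y * (u x - u y) := by
  have h1 := (G.w_summable x).mul_left (u x)
  exact (h1.sub (wg_summable_mul G u hu x)).congr fun y => by ring

private lemma wg_key {X : Type*} (G : WGraph X) (f : ℝ → ℝ) (lam : ℝ)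
    (hf : (CondF1 f ∧ 0 < lam) ∨ (∃ L, CondF2 f L ∧ 0 < lam ∧ lam < 1 / L))
    (u₁ u₂ : X → ℝ) (h₁ : G.inDomLap u₁) (h₂ : G.inDomLap u₂)
    (hle : ∀ x, u₂ x + lam * G.Aop f u₂ x ≤ u₁ x + lam * G.Aop f u₁ x)
    (x : X) (hx : 0 < u₂ x - u₁ x) :
    ∃ y, G.Adj x y ∧ u₂ x - u₁ x < u₂ y - u₁ y := by
  have hlam : 0 < lam := by rcases hf with ⟨_, h⟩ | ⟨L, _, h, _⟩ <;> exact h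
  have hpos : 0 < (u₂ x - u₁ x) - lam * (f (u₂ x) - f (u₁ x)) := by
    rcases hf with ⟨⟨_, ha, _⟩, hlam'⟩ | ⟨L, ⟨hL, hLip, _⟩, hlam', hlamL⟩
    · have hfle : f (u₂ x) ≤ f (u₁ x) := ha (by linarith)
      nlinarith
    · have h1 := hLip (u₁ x) (u₂ x)
      rw [abs_of_pos hx] at h1
      have h3 : lam * L < 1 := by rw [lt_div_iff₀ hL] at hlamL; linarith
      have h4 := abs_le.mp h1
      nlinarith
  by_contra hno
  push_neg at hno
  have hTnn : 0 ≤ ∑' y, G.w x y * ((u₂ x - u₁ x) - (u₂ y - u₁ y)) := by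
    apply tsum_nonneg
    intro y
    rcases (G.w_nonneg x y).eq_or_lt with h | h
    · rw [← h]; simp
    · exact mul_nonneg h.le (by linarith [hno y h])
  have hs₁ := wg_summable_diff G u₁ h₁ x
  have hs₂ := wg_summable_diff G u₂ h₂ x
  have hT : (∑' y, G.w x y * ((u₂ x - u₁ x) - (u₂ y - u₁ y)))
      = (∑' y, G.w x y * (u₂ x - u₂ y)) - ∑' y, G.w x y * (u₁ x - u₁ y) := by
    rw [← hs₂.tsum_sub hs₁]
    exact tsum_congr fun y => by ring
  have hE := hle x
  simp only [WGraph.Aop, WGraph.lap] at hE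
  set A := ∑' y, G.w x y * (u₂ x - u₂ y) with hA
  set B := ∑' y, G.w x y * (u₁ x - u₁ y) with hB
  have hμ := G.mu_pos x
  have hκ : 0 ≤ G.kap x / G.mu x := div_nonneg (G.kap_nonneg x) hμ.le
  have hAB : 0 ≤ lam * ((1 / G.mu x) * (A - B)) := by
    rw [hT] at hTnn
    exact mul_nonneg hlam.le (mul_nonneg (by positivity) hTnn)
  have hκt : 0 ≤ lam * ((G.kap x / G.mu x) * (u₂ x - u₁ x)) :=
    mul_nonneg hlam.le (mul_nonneg hκ hx.le)
  nlinarith [hE, hpos, hAB, hκt]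

private lemma wg_comparison {X : Type*} (G : WGraph X) (f : ℝ → ℝ) (lam : ℝ)
    (hf : (CondF1 f ∧ 0 < lam) ∨ (∃ L, CondF2 f L ∧ 0 < lam ∧ lam < 1 / L))
    (u₁ u₂ : X → ℝ) (h₁ : G.inDomLap u₁) (h₂ : G.inDomLap u₂)
    (hle : ∀ x, u₂ x + lam * G.Aop f u₂ x ≤ u₁ x + lam * G.Aop f u₁ x)
    (halt : (∀ γ : ℕ → X, ¬ G.InfinitePath γ) ∨
      (G.CondIP ∧ ∃ p > (0 : ℝ), ∀ γ : ℕ → X, G.InfinitePath γ →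
        Summable (fun n => |u₁ (γ n) - u₂ (γ n)| ^ p * G.mu (γ n)))) :
    ∀ x, u₂ x ≤ u₁ x := by
  by_contra hcon
  push_neg at hcon
  obtain ⟨x₀, hx₀⟩ := hcon
  have hx₀' : 0 < u₂ x₀ - u₁ x₀ := by linarith
  set v : X → ℝ := fun x => u₂ x - u₁ x with hv
  have key : ∀ x : {x : X // 0 < v x}, ∃ y, G.Adj x.1 y ∧ v x.1 < v y :=
    fun x => wg_key G f lam hf u₁ u₂ h₁ h₂ hle x.1 x.2
  let next : {x : X // 0 < v x} → {x : X // 0 < v x} :=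
    fun x => ⟨(key x).choose, lt_trans x.2 (key x).choose_spec.2⟩
  let γ' : ℕ → {x : X // 0 < v x} := fun n => next^[n] ⟨x₀, hx₀'⟩
  have hγ'succ : ∀ n, γ' (n + 1) = next (γ' n) := fun n =>
    Function.iterate_succ_apply' next n _
  set γ : ℕ → X := fun n => (γ' n).1 with hγ
  have hstep : ∀ n, G.Adj (γ n) (γ (n + 1)) ∧ v (γ n) < v (γ (n + 1)) := by
    intro n
    have e : γ (n + 1) = (key (γ' n)).choose := by
      show (γ' (n + 1)).1 = _
      rw [hγ'succ n]
    rw [e]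
    exact (key (γ' n)).choose_spec
  have hmono : StrictMono (fun n => v (γ n)) :=
    strictMono_nat_of_lt_succ fun n => (hstep n).2
  have hinj : Function.Injective γ := fun m n h => hmono.injective (by simp only [h])
  have hpath : G.InfinitePath γ := ⟨hinj, fun n => (hstep n).1⟩
  rcases halt with hno | ⟨hIP, p, hp, hsum⟩
  · exact hno γ hpath
  · have hvpos : ∀ n, 0 < v (γ n) := fun n => (γ' n).2
    have hge : ∀ n, v x₀ ≤ v (γ n) := by
      intro n
      have h0 : v (γ 0) ≤ v (γ n) := hmono.monotone (Nat.zero_le n)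
      exact h0
    have hs := hsum γ hpath
    have habs : ∀ n, |u₁ (γ n) - u₂ (γ n)| = v (γ n) := fun n => by
      rw [abs_sub_comm, abs_of_pos (hvpos n)]
    have hc : 0 < v x₀ ^ p := Real.rpow_pos_of_pos hx₀' p
    apply hIP γ hpath
    refine Summable.of_nonneg_of_le (fun n => (G.mu_pos _).le) (fun n => ?_)
      (hs.mul_left (1 / v x₀ ^ p))
    have h1 : v x₀ ^ p ≤ v (γ n) ^ p := Real.rpow_le_rpow hx₀'.le (hge n) hp.le
    rw [habs n]
    have h2 : 1 ≤ 1 / v x₀ ^ p * v (γ n) ^ p := by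
      rw [div_mul_eq_mul_div, le_div_iff₀ hc]; linarith
    nlinarith [mul_le_mul_of_nonneg_right h2 (G.mu_pos (γ n)).le]

private lemma abs_sub_rpow_le (a b p : ℝ) (hp : 0 ≤ p) :
    |a - b| ^ p ≤ 2 ^ p * (|a| ^ p + |b| ^ p) := by
  have h1 : |a - b| ≤ 2 * max |a| |b| := by
    have ht := abs_sub a b
    have h2 := le_max_left |a| |b|
    have h3 := le_max_right |a| |b|
    linarith
  have h4 : |a - b| ^ p ≤ (2 * max |a| |b|) ^ p :=
    Real.rpow_le_rpow (abs_nonneg _) h1 hp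
  have h5 : (2 * max |a| |b|) ^ p = 2 ^ p * max |a| |b| ^ p :=
    Real.mul_rpow (by norm_num) ((abs_nonneg a).trans (le_max_left _ _))
  have h6 : max |a| |b| ^ p ≤ |a| ^ p + |b| ^ p := by
    rcases max_cases |a| |b| with ⟨h, _⟩ | ⟨h, _⟩ <;> rw [h]
    · nlinarith [Real.rpow_nonneg (abs_nonneg b) p]
    · nlinarith [Real.rpow_nonneg (abs_nonneg a) p]
  have h7 : (0:ℝ) ≤ 2 ^ p := Real.rpow_nonneg (by norm_num) p
  calc |a - b| ^ p ≤ 2 ^ p * max |a| |b| ^ p := by rw [← h5]; exact h4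
    _ ≤ 2 ^ p * (|a| ^ p + |b| ^ p) := by nlinarith

/-- comparison of solutions of `(id + λ𝒜)u_k = g_k`, and injectivity
of `id + λ𝒜` on `dom_p(𝒜)` when `G` has no infinite path or satisfies (IP). -/
theorem stmt4 {X : Type*} [Countable X] (G : WGraph X) (f : ℝ → ℝ) (lam : ℝ)
    (hG : G.Connected)
    (hf : (CondF1 f ∧ 0 < lam) ∨ (∃ L, CondF2 f L ∧ 0 < lam ∧ lam < 1 / L)) :
    (∀ (u₁ u₂ g₁ g₂ : X → ℝ), G.inDomLap u₁ → G.inDomLap u₂ →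
      (∀ x, u₁ x + lam * G.Aop f u₁ x = g₁ x) →
      (∀ x, u₂ x + lam * G.Aop f u₂ x = g₂ x) →
      ((∀ γ : ℕ → X, ¬ G.InfinitePath γ) ∨
        (G.CondIP ∧ ∃ p > (0 : ℝ), ∀ γ : ℕ → X, G.InfinitePath γ →
          Summable (fun n => |u₁ (γ n) - u₂ (γ n)| ^ p * G.mu (γ n)))) →
      (∀ x, g₂ x ≤ g₁ x) → ∀ x, u₂ x ≤ u₁ x) ∧
    (((∀ γ : ℕ → X, ¬ G.InfinitePath γ) ∨ G.CondIP) →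
      ∀ p : ℝ, 1 ≤ p →
        Set.InjOn (fun (u : X → ℝ) => fun x => u x + lam * G.Aop f u x)
          {u : X → ℝ | G.inDomA f p u}) := by
  constructor
  · intro u₁ u₂ g₁ g₂ h₁ h₂ he₁ he₂ halt hg x
    exact wg_comparison G f lam hf u₁ u₂ h₁ h₂
      (fun y => by rw [he₁ y, he₂ y]; exact hg y) halt x
  · intro hcase p hp u₁ hu₁ u₂ hu₂ heq
    have hp0 : (0:ℝ) < p := lt_of_lt_of_le one_pos hp
    have heq' : ∀ x, u₁ x + lam * G.Aop f u₁ x = u₂ x + lam * G.Aop f u₂ x :=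
      fun x => congrFun heq x
    have hsump : ∀ a b : X → ℝ, G.memLp p a → G.memLp p b →
        ∀ γ : ℕ → X, G.InfinitePath γ →
        Summable (fun n => |a (γ n) - b (γ n)| ^ p * G.mu (γ n)) := by
      intro a b ha hb γ hγ
      have s1 : Summable ((fun x => |a x| ^ p * G.mu x) ∘ γ) :=
        ha.comp_injective hγ.1
      have s2 : Summable ((fun x => |b x| ^ p * G.mu x) ∘ γ) :=
        hb.comp_injective hγ.1
      refine Summable.of_nonneg_of_le
        (fun n => mul_nonneg (Real.rpow_nonneg (abs_nonneg _) p) (G.mu_pos _).le)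
        (fun n => ?_) (((s1.add s2).mul_left (2 ^ p)))
      simp only [Function.comp]
      calc |a (γ n) - b (γ n)| ^ p * G.mu (γ n)
          ≤ (2 ^ p * (|a (γ n)| ^ p + |b (γ n)| ^ p)) * G.mu (γ n) :=
            mul_le_mul_of_nonneg_right (abs_sub_rpow_le _ _ p hp0.le) (G.mu_pos _).le
        _ = 2 ^ p * (|a (γ n)| ^ p * G.mu (γ n) + |b (γ n)| ^ p * G.mu (γ n)) := by
            ring
    have mkalt : ∀ a b : X → ℝ, G.memLp p a → G.memLp p b →
        ((∀ γ : ℕ → X, ¬ G.InfinitePath γ) ∨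
          (G.CondIP ∧ ∃ q > (0 : ℝ), ∀ γ : ℕ → X, G.InfinitePath γ →
            Summable (fun n => |a (γ n) - b (γ n)| ^ q * G.mu (γ n)))) := by
      intro a b ha hb
      rcases hcase with hno | hIP
      · exact Or.inl hno
      · exact Or.inr ⟨hIP, p, hp0, hsump a b ha hb⟩
    funext x
    have hle1 := wg_comparison G f lam hf u₁ u₂ hu₁.2.1 hu₂.2.1
      (fun y => (heq' y).ge) (mkalt u₁ u₂ hu₁.1 hu₂.1) x
    have hle2 := wg_comparison G f lam hf u₂ u₁ hu₂.2.1 hu₁.2.1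
      (fun y => (heq' y).le) (mkalt u₂ u₁ hu₂.1 hu₁.1) x
    exact le_antisymm hle2 hle1
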